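/- For every positive natural number n and every integer m, m is regular modulo n if and only if gcd(m^2, n) = gcd(m, n). -/

import Mathlib

/-- An integer `m` is regular modulo `n` if `m^2 * x ≡ m (mod n)` for some integer `x`. -/
def IsRegularMod (n : ℕ) (m : ℤ) : Prop := ∃ x : ℤ, m ^ 2 * x ≡ m [ZMOD (n : ℤ)]

theorem isRegularMod_iff_gcd_sq_eq_gcd (n : ℕ) (hn : 0 < n) (m : ℤ) :
    IsRegularMod n m ↔ Int.gcd (m ^ 2) (n : ℤ) = Int.gcd m (n : ℤ) := by
  constructor
  · rintro ⟨x, hx⟩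
    have hdvd : (n : ℤ) ∣ m - m ^ 2 * x := Int.ModEq.dvd hx
    have h1 : (Int.gcd (m ^ 2) n : ℤ) ∣ m := by
      have h3 : (Int.gcd (m ^ 2) n : ℤ) ∣ m - m ^ 2 * x :=
        (Int.gcd_dvd_right _ _).trans hdvd
      have h2 : (Int.gcd (m ^ 2) n : ℤ) ∣ m ^ 2 * x :=
        (Int.gcd_dvd_left _ _).mul_right x
      simpa using dvd_add h3 h2
    apply Nat.dvd_antisymm
    · rw [← Int.natCast_dvd_natCast]
      exact Int.dvd_coe_gcd h1 (Int.gcd_dvd_right _ _)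
    · rw [← Int.natCast_dvd_natCast]
      exact Int.dvd_coe_gcd ((Int.gcd_dvd_left _ _).trans (dvd_pow_self m two_ne_zero))
        (Int.gcd_dvd_right _ _)
  · intro h
    obtain ⟨k, hk⟩ : (Int.gcd m n : ℤ) ∣ m := Int.gcd_dvd_left _ _
    have bez : (Int.gcd (m ^ 2) (n : ℤ) : ℤ) =
        m ^ 2 * Int.gcdA (m ^ 2) n + n * Int.gcdB (m ^ 2) n := Int.gcd_eq_gcd_ab _ _
    rw [h] at bez
    refine ⟨Int.gcdA (m ^ 2) n * k, ?_⟩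
    have key : m ^ 2 * (Int.gcdA (m ^ 2) n * k) - m = -((n : ℤ) * (Int.gcdB (m ^ 2) n * k)) := by
      linear_combination -hk - k * bez
    have hdvd : (n : ℤ) ∣ m ^ 2 * (Int.gcdA (m ^ 2) n * k) - m := by
      rw [key]; exact (dvd_mul_right _ _).neg_right
    exact Int.ModEq.symm (Int.modEq_iff_dvd.mpr (by simpa using hdvd))
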